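/- Equation (20), recursive characterization of the attacked state estimate: for every s ∈ P_{Σ_mΣ_{o,e}}(L(G_a||R_a||A)) and e ∈ Σ_{o,e} with se ∈ P_{Σ_mΣ_{o,e}}(L(G_a||R_a||A)), one has RE(se) = {x ∈ X_G : x = δ_{G_a}(δ_{G_a}(RE(s), e), t) for some t ∈ (Σ_uo ∩ Γ_{R_a}(δ_{R_a}(x_{0,R}, se)))*}, where δ_{G_a}(Q,u) = {δ_{G_a}(x,u) : x ∈ Q, δ_{G_a}(x,u) is defined} for a set of states Q. -/

import Mathlib

attribute [local instance] Classical.propDecidable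

noncomputable section

namespace RobustDES

/-- Events of the attacked system `Σ_m = Σ ∪ Σ_a^i ∪ Σ_a^d`:
`plain a` is a legitimate event `a ∈ Σ`, `ins a` is the inserted copy `a_i`
and `del a` is the deleted copy `a_d`. -/
inductive Ev (S : Type) : Type
  | plain : S → Ev S
  | ins : S → Ev S
  | del : S → Ev S

/-- Extension of a partial transition function to strings. -/
def run {X E : Type} (δ : X → E → Option X) : X → List E → Option X
  | x, [] => some x
  | x, e :: s => (δ x e).bind fun y => run δ y s

/-- The language generated by a partial automaton `(X, δ, x0)`. -/
def Lang {X E : Type} (δ : X → E → Option X) (x0 : X) : Set (List E) :=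
  { s | (run δ x0 s).isSome }

variable {S XG XR XA : Type}

/-- The projection `P^G : Σ_m* → Σ*` (`a, a_d ↦ a`, `a_i ↦ ε`). -/
def PGproj : List (Ev S) → List S := fun s =>
  s.flatMap fun e =>
    match e with
    | .plain a => [a]
    | .del a => [a]
    | .ins _ => []

/-- The projection `P^S : Σ_m* → Σ*` (`a, a_i ↦ a`, `a_d ↦ ε`). -/
def PSproj : List (Ev S) → List S := fun s =>
  s.flatMap fun e =>
    match e with
    | .plain a => [a]
    | .ins a => [a]
    | .del _ => []

/-- Natural projection `P_{ΣΣo}` erasing events not in `So`. -/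
def projOn (So : Set S) (s : List S) : List S :=
  s.filter fun e => decide (e ∈ So)

/-- Membership of a tagged event in `Σ_{o,e} = Σ_o ∪ Σ_a^i ∪ Σ_a^d`. -/
def inOe (So Sa : Set S) : Ev S → Prop
  | .plain a => a ∈ So
  | .ins a => a ∈ Sa
  | .del a => a ∈ Sa

/-- Natural projection `P_{Σ_mΣ_{o,e}}` erasing the unobservable events `Σ_uo`. -/
def projOe (So : Set S) : List (Ev S) → List (Ev S) := fun s =>
  s.flatMap fun e =>
    match e with
    | .plain a => if a ∈ So then [Ev.plain a] else []
    | e => [e]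

/-- Transition function of the attacked plant `G_a` (over `Σ_m`):
`δ_{G_a}(x,e) = δ_G(x, P^G(e))`. -/
def δGa (Sa : Set S) (δG : XG → S → Option XG) : XG → Ev S → Option XG
  | x, .plain a => δG x a
  | x, .del a => if a ∈ Sa then δG x a else none
  | x, .ins a => if a ∈ Sa then some x else none

/-- Active (legitimate) event set of a supervisor state. -/
def ΓR (δR : XR → S → Option XR) (y : XR) : Set S := {e | (δR y e).isSome}

/-- Transition function of the attacked supervisor `R_a` (over `Σ_m`). -/
def δRa (Sa : Set S) (δR : XR → S → Option XR) : XR → Ev S → Option XR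
  | y, .plain a => δR y a
  | y, .ins a =>
      if a ∈ Sa then (if (δR y a).isSome then δR y a else some y) else none
  | y, .del a =>
      if a ∈ Sa then (if (δR y a).isSome then some y else none) else none

/-- `R` is a supervisor realization: every uncontrollable event is enabled
everywhere and enabled unobservable events self-loop. -/
def IsSupRealization (So Suc : Set S) (δR : XR → S → Option XR) : Prop :=
  (∀ x e, e ∈ Suc → (δR x e).isSome) ∧
  (∀ x e, e ∉ So → (δR x e).isSome → δR x e = some x)

/-- `A` is an attack automaton over `Σ_{o,e}`: it is complete on `Σ_o \ Σ_a`,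
for every `e ∈ Σ_a` either `e` or `e_d` is defined, and it is undefined outside
`Σ_{o,e}`. -/
def IsAttack (So Sa : Set S) (δA : XA → Ev S → Option XA) : Prop :=
  (∀ q a, a ∈ So → a ∉ Sa → (δA q (.plain a)).isSome) ∧
  (∀ q a, a ∈ Sa → ((δA q (.plain a)).isSome ∨ (δA q (.del a)).isSome)) ∧
  (∀ q e, ¬ inOe So Sa e → δA q e = none)

/-- Transition function of the composition `G_a || R_a || A` over `Σ_m`:
all three components move on events of `Σ_{o,e}`, only `G_a` and `R_a` move on
unobservable events. -/
def δGRA (So Sa : Set S) (δG : XG → S → Option XG) (δR : XR → S → Option XR)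
    (δA : XA → Ev S → Option XA) :
    XG × XR × XA → Ev S → Option (XG × XR × XA) := fun p e =>
  match e with
  | .plain a =>
    if a ∈ So then
      match δGa Sa δG p.1 (.plain a), δRa Sa δR p.2.1 (.plain a), δA p.2.2 (.plain a) with
      | some x, some y, some z => some (x, y, z)
      | _, _, _ => none
    else
      match δGa Sa δG p.1 (.plain a), δRa Sa δR p.2.1 (.plain a) with
      | some x, some y => some (x, y, p.2.2)
      | _, _ => none
  | e =>
      match δGa Sa δG p.1 e, δRa Sa δR p.2.1 e, δA p.2.2 e with
      | some x, some y, some z => some (x, y, z)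
      | _, _, _ => none

/-- Transition function of the composition `G_a || R_a` over `Σ_m`. -/
def δGaRa (Sa : Set S) (δG : XG → S → Option XG) (δR : XR → S → Option XR) :
    XG × XR → Ev S → Option (XG × XR) := fun p e =>
  match δGa Sa δG p.1 e, δRa Sa δR p.2 e with
  | some x, some y => some (x, y)
  | _, _ => none

/-- `R` is robust w.r.t. `G`, `X_crit` and `A`:
`δ_G(x_{0,G}, s) ∉ X_crit` for every `s ∈ L(S_A/G) = P^G(L(G_a||R_a||A))`. -/
def Robust (So Sa : Set S) (Xcrit : Set XG)
    (δG : XG → S → Option XG) (x0G : XG)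
    (δR : XR → S → Option XR) (x0R : XR)
    (δA : XA → Ev S → Option XA) (x0A : XA) : Prop :=
  ∀ t ∈ Lang (δGRA So Sa δG δR δA) (x0G, x0R, x0A),
    ∀ x, run δG x0G (PGproj t) = some x → x ∉ Xcrit

/-- Total extension `Δ_R` of `δ_R` over observable strings. -/
def ΔRrun (δR : XR → S → Option XR) : XR → List S → XR
  | y, [] => y
  | y, e :: s => ΔRrun δR ((δR y e).getD y) s

/-- Control decision `C_R(s) = Γ_R(Δ_R(x_{0,R}, s))`. -/
def CR (δR : XR → S → Option XR) (x0R : XR) (s : List S) : Set S :=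
  {e | (δR (ΔRrun δR x0R s) e).isSome}

/-- The state estimate under attack
`RE(s) = {x : x = δ_{G_a}(x_{0,G}, t), t ∈ P⁻¹_{Σ_mΣ_{o,e}}(s) ∩ L(G_a||R_a||A)}`. -/
def RE (So Sa : Set S) (δG : XG → S → Option XG) (x0G : XG)
    (δR : XR → S → Option XR) (x0R : XR)
    (δA : XA → Ev S → Option XA) (x0A : XA) (s : List (Ev S)) : Set XG :=
  {x | ∃ t, projOe So t = s ∧ t ∈ Lang (δGRA So Sa δG δR δA) (x0G, x0R, x0A) ∧
        run (δGa Sa δG) x0G t = some x}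

/-! ### The arena -/

/-- Unobservable reach `UR_γ(Q)`. -/
def URch (So : Set S) (δG : XG → S → Option XG) (γ : Set S) (Q : Set XG) : Set XG :=
  {x | ∃ t : List S, (∀ a ∈ t, a ∉ So ∧ a ∈ γ) ∧ ∃ q ∈ Q, run δG q t = some x}

/-- Observable reach `NX_e(Q)`. -/
def NXr (δG : XG → S → Option XG) (a : S) (Q : Set XG) : Set XG :=
  {x | ∃ q ∈ Q, δG q a = some x}

/-- Active event set `Γ_G(Q)` of a set of plant states. -/
def ΓGset (δG : XG → S → Option XG) (Q : Set XG) : Set S :=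
  {a | ∃ x ∈ Q, (δG x a).isSome}

/-- Player-1 states of the arena. -/
abbrev AQ1 (XG XA : Type) := Set XG × XA

/-- Player-2 states of the arena. -/
abbrev AQ2 (S XG XA : Type) := Set XG × XA × Set S × Option S

/-- Player-1 transition `h₁((S₁,S₂),γ) = (UR_γ(S₁), S₂, γ, ε)`. -/
def h1 (So : Set S) (δG : XG → S → Option XG) (p : AQ1 XG XA) (γ : Set S) :
    AQ2 S XG XA :=
  (URch So δG γ p.1, p.2, γ, none)

/-- Player-2 transition `h₂`. -/
def h2 (So Sa : Set S) (δG : XG → S → Option XG) (δA : XA → Ev S → Option XA)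
    (q : AQ2 S XG XA) : Ev S → Option (AQ1 XG XA ⊕ AQ2 S XG XA)
  | .plain a =>
    if a ∈ So then
      if q.2.2.2 = some a then some (Sum.inl (q.1, q.2.1))
      else if q.2.2.2 = none ∧ a ∈ ΓGset δG q.1 ∧ a ∈ q.2.2.1 then
        (δA q.2.1 (.plain a)).map fun z => Sum.inl (NXr δG a q.1, z)
      else none
    else none
  | .ins a =>
    if a ∈ Sa ∧ q.2.2.2 = none then
      (δA q.2.1 (.ins a)).map fun z => Sum.inr (q.1, z, q.2.2.1, some a)
    else none
  | .del a =>
    if a ∈ Sa ∧ q.2.2.2 = none ∧ a ∈ ΓGset δG q.1 ∧ a ∈ q.2.2.1 then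
      (δA q.2.1 (.del a)).map fun z =>
        Sum.inr (URch So δG q.2.2.1 (NXr δG a q.1), z, q.2.2.1, none)
    else none

/-- One-step map `H₂ : Q₂ × Σ_{o,e} × Γ ⇀ Q₂` of Definition 6. -/
def H2 (So Sa : Set S) (δG : XG → S → Option XG) (δA : XA → Ev S → Option XA)
    (q : AQ2 S XG XA) : Ev S → Set S → Option (AQ2 S XG XA)
  | .plain a, γ =>
      (h2 So Sa δG δA q (.plain a)).bind fun r =>
        match r with
        | .inl p => some (h1 So δG p γ)
        | .inr _ => none
  | .del a, _ =>
      (h2 So Sa δG δA q (.del a)).bind fun r =>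
        match r with
        | .inr q' => some q'
        | .inl _ => none
  | .ins a, γ =>
      (h2 So Sa δG δA q (.ins a)).bind fun r =>
        match r with
        | .inr q' =>
            (h2 So Sa δG δA q' (.plain a)).bind fun r2 =>
              match r2 with
              | .inl p => some (h1 So δG p γ)
              | .inr _ => none
        | .inl _ => none

/-- Extension of `H₂` to strings with a sequence of control decisions. -/
def H2run (So Sa : Set S) (δG : XG → S → Option XG) (δA : XA → Ev S → Option XA) :
    AQ2 S XG XA → List (Ev S) → List (Set S) → Option (AQ2 S XG XA)
  | q, [], [] => some q
  | q, e :: s, γ :: γs =>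
      (H2 So Sa δG δA q e γ).bind fun q' => H2run So Sa δG δA q' s γs
  | _, _ :: _, [] => none
  | _, [], _ :: _ => none

/-- The sequence of control decisions `γ_i = C_R(P^S(s^i))`, `i = 1, …, |s|`. -/
def ctrlSeq (δR : XR → S → Option XR) (x0R : XR) (s : List (Ev S)) : List (Set S) :=
  (List.range s.length).map fun i => CR δR x0R (PSproj (s.take (i + 1)))

/-- Initial arena state `q₀ = ({x_{0,G}}, x_{0,A})`. -/
def arenaInit (x0G : XG) (x0A : XA) : AQ1 XG XA := ({x0G}, x0A)

/-- The arena `𝒜` regarded as a partial automaton over `E = Γ ∪ Σ_{o,e}`. -/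
def δAr (So Suc Sa : Set S) (δG : XG → S → Option XG) (δA : XA → Ev S → Option XA) :
    (AQ1 XG XA ⊕ AQ2 S XG XA) → (Set S ⊕ Ev S) → Option (AQ1 XG XA ⊕ AQ2 S XG XA)
  | .inl p, .inl γ => if Suc ⊆ γ then some (.inr (h1 So δG p γ)) else none
  | .inr q, .inr e => h2 So Sa δG δA q e
  | _, _ => none

/-- The projection `I₁` onto the plant state-estimate component. -/
def I1 : (AQ1 XG XA ⊕ AQ2 S XG XA) → Set XG := Sum.elim Prod.fst Prod.fst

/-- The projection `I₂` onto the attacker-state component. -/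
def I2 : (AQ1 XG XA ⊕ AQ2 S XG XA) → XA := Sum.elim (fun p => p.2) (fun q => q.2.1)

/-- The language `L(𝒜)` of the arena. -/
def LA (So Suc Sa : Set S) (δG : XG → S → Option XG) (δA : XA → Ev S → Option XA)
    (x0G : XG) (x0A : XA) : Set (List (Set S ⊕ Ev S)) :=
  Lang (δAr So Suc Sa δG δA) (Sum.inl (arenaInit x0G x0A))

/-- The language `L(𝒜^{trim})`: strings of `L(𝒜)` whose runs visit no state `q`
with `I₁(q) ∩ X_crit ≠ ∅`. -/
def LAtrim (So Suc Sa : Set S) (δG : XG → S → Option XG)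
    (δA : XA → Ev S → Option XA) (x0G : XG) (x0A : XA) (Xcrit : Set XG) :
    Set (List (Set S ⊕ Ev S)) :=
  {s | s ∈ LA So Suc Sa δG δA x0G x0A ∧
    ∀ u, u <+: s → ∀ st, run (δAr So Suc Sa δG δA) (Sum.inl (arenaInit x0G x0A)) u =
      some st → I1 st ∩ Xcrit = ∅}

/-- The controllable meta-events `E_c = Γ \ {Σ_uc}`. -/
def Ec (Suc : Set S) : Set (Set S ⊕ Ev S) :=
  {a | ∃ γ : Set S, a = Sum.inl γ ∧ Suc ⊆ γ ∧ γ ≠ Suc}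

/-- `K` is controllable w.r.t. `L` and the uncontrollable events `Euc`. -/
def ControllableLang {E : Type} (L : Set (List E)) (Euc : Set E)
    (K : Set (List E)) : Prop :=
  ∀ s ∈ K, ∀ a ∈ Euc, s ++ [a] ∈ L → s ++ [a] ∈ K

/-- `K` is normal w.r.t. the projection `P` and `L`: `K = P⁻¹(P(K)) ∩ L`. -/
def NormalLang {E : Type} (P : List E → List E) (L K : Set (List E)) : Prop :=
  K = {s | s ∈ L ∧ ∃ t ∈ K, P t = P s}

/-- Natural projection of meta-strings onto the observable meta-events
`E_o = E \ Σ_a^e`. -/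
def projEo : List (Set S ⊕ Ev S) → List (Set S ⊕ Ev S) := fun s =>
  s.flatMap fun a =>
    match a with
    | Sum.inr (.ins _) => []
    | Sum.inr (.del _) => []
    | a => [a]

/-- `L(𝒜^{sup})`: the union of all sublanguages of `L(𝒜^{trim})` that are
controllable w.r.t. `L(𝒜)` and `E \ E_c` and normal w.r.t. `E_o` and `L(𝒜)`. -/
def Lsup (So Suc Sa : Set S) (δG : XG → S → Option XG)
    (δA : XA → Ev S → Option XA) (x0G : XG) (x0A : XA) (Xcrit : Set XG) :
    Set (List (Set S ⊕ Ev S)) :=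
  ⋃₀ {K | K ⊆ LAtrim So Suc Sa δG δA x0G x0A Xcrit ∧
      ControllableLang (LA So Suc Sa δG δA x0G x0A) (Ec Suc)ᶜ K ∧
      NormalLang projEo (LA So Suc Sa δG δA x0G x0A) K}

/-- The run word `W(s; γ₀, …, γ_{|s|})` in the arena. -/
def Wword (γ0 : Set S) (s : List (Ev S)) (γs : List (Set S)) :
    List (Set S ⊕ Ev S) :=
  Sum.inl γ0 :: (s.zip γs).flatMap fun p =>
    match p.1 with
    | .plain a => [Sum.inr (Ev.plain a), Sum.inl p.2]
    | .del a => [Sum.inr (Ev.del a)]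
    | .ins a => [Sum.inr (Ev.ins a), Sum.inr (Ev.plain a), Sum.inl p.2]

/-- The projection `η : E* → Σ_o*` erasing all meta-events not in `Σ_o`. -/
def ηproj (So : Set S) : List (Set S ⊕ Ev S) → List S := fun s =>
  s.flatMap fun a =>
    match a with
    | Sum.inr (.plain e) => if e ∈ So then [e] else []
    | _ => []


/-- The all-out attack strategy: a single state with every event of `Σ_{o,e}`
defined (as a self-loop). -/
def allOutδ (So Sa : Set S) : Unit → Ev S → Option Unit := fun _ e =>
  if inOe So Sa e then some () else none

/-- The supervisor extracted from a generator of `L(𝒜^{sup})` by a choice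
function `c` of control decisions (Algorithm 1): on an observable enabled event
follow the arena (choose `c y`, then the event), on an unobservable enabled
event self-loop, and disable events outside `c y`. -/
def extractR {Y : Type} (So : Set S) (δg : Y → (Set S ⊕ Ev S) → Option Y)
    (c : Y → Set S) : Y → S → Option Y := fun y a =>
  if a ∈ c y then
    if a ∈ So then
      some (((δg y (Sum.inl (c y))).bind fun y' =>
        δg y' (Sum.inr (Ev.plain a))).getD y)
    else some y
  else none

/-- The language `L_R` built inductively from a supervisor `R` inside the arena:
`ε ∈ L_R`; from a player-2 state every event of `Σ_{o,e}` feasible in `𝒜` may be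
appended; from a player-1 state the control decisions `Σ_uc` and `C_R(η(s))`
may be appended. -/
inductive LRmem {S XG XA XR : Type} (So Suc Sa : Set S)
    (δG : XG → S → Option XG) (x0G : XG)
    (δA : XA → Ev S → Option XA) (x0A : XA)
    (δR : XR → S → Option XR) (x0R : XR) : List (Set S ⊕ Ev S) → Prop
  | nil : LRmem So Suc Sa δG x0G δA x0A δR x0R []
  | p2 (s : List (Set S ⊕ Ev S)) (q : AQ2 S XG XA) (e : Ev S) :
      LRmem So Suc Sa δG x0G δA x0A δR x0R s →
      run (δAr So Suc Sa δG δA) (Sum.inl (arenaInit x0G x0A)) s = some (Sum.inr q) →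
      inOe So Sa e →
      (run (δAr So Suc Sa δG δA) (Sum.inl (arenaInit x0G x0A))
        (s ++ [Sum.inr e])).isSome →
      LRmem So Suc Sa δG x0G δA x0A δR x0R (s ++ [Sum.inr e])
  | p1uc (s : List (Set S ⊕ Ev S)) (p : AQ1 XG XA) :
      LRmem So Suc Sa δG x0G δA x0A δR x0R s →
      run (δAr So Suc Sa δG δA) (Sum.inl (arenaInit x0G x0A)) s = some (Sum.inl p) →
      LRmem So Suc Sa δG x0G δA x0A δR x0R (s ++ [Sum.inl Suc])
  | p1R (s : List (Set S ⊕ Ev S)) (p : AQ1 XG XA) :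
      LRmem So Suc Sa δG x0G δA x0A δR x0R s →
      run (δAr So Suc Sa δG δA) (Sum.inl (arenaInit x0G x0A)) s = some (Sum.inl p) →
      LRmem So Suc Sa δG x0G δA x0A δR x0R (s ++ [Sum.inl (CR δR x0R (ηproj So s))])

/-! ### Auxiliary lemmas for the proof of Equation (20) -/

section Eq20Aux

variable {So Suc Sa : Set S} {δG : XG → S → Option XG} {δR : XR → S → Option XR}
  {δA : XA → Ev S → Option XA}

lemma run_append' {X E : Type} (δ : X → E → Option X) (u : List E) :
    ∀ (x : X) (v : List E),
      run δ x (u ++ v) = (run δ x u).bind fun z => run δ z v := by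
  induction u with
  | nil => intro x v; simp [run]
  | cons a u ih =>
      intro x v
      simp only [List.cons_append, run]
      cases δ x a <;> simp [ih]

lemma projOe_append (So : Set S) (u v : List (Ev S)) :
    projOe So (u ++ v) = projOe So u ++ projOe So v := by
  simp [projOe]

lemma projOe_cons' (So : Set S) (e : Ev S) (t : List (Ev S)) :
    projOe So (e :: t) = projOe So [e] ++ projOe So t := by
  simp [projOe]

lemma projOe_single (So : Set S) (b : Ev S) :
    projOe So [b] = [] ∨ projOe So [b] = [b] := by
  rcases b with a | a | a
  · by_cases ha : a ∈ So <;> simp [projOe, ha]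
  · simp [projOe]
  · simp [projOe]

lemma projOe_single_keep {So Sa : Set S} {e : Ev S} (he : inOe So Sa e) :
    projOe So [e] = [e] := by
  rcases e with a | a | a
  · have ha : a ∈ So := he
    simp [projOe, ha]
  · simp [projOe]
  · simp [projOe]

lemma projOe_single_empty {So : Set S} {b : Ev S} (h : projOe So [b] = []) :
    ∃ a, b = Ev.plain a ∧ a ∉ So := by
  rcases b with a | a | a
  · by_cases ha : a ∈ So
    · simp [projOe, ha] at h
    · exact ⟨a, rfl, ha⟩
  · simp [projOe] at h
  · simp [projOe] at h

lemma projOe_split {So : Set S} :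
    ∀ {w s : List (Ev S)} {e : Ev S}, projOe So w = s ++ [e] →
      ∃ u v, w = u ++ e :: v ∧ projOe So u = s ∧ projOe So v = [] := by
  intro w
  induction w using List.reverseRecOn with
  | nil => intro s e h; simp [projOe] at h
  | append_singleton w b ih =>
      intro s e h
      rw [projOe_append] at h
      rcases projOe_single So b with hb | hb
      · rw [hb, List.append_nil] at h
        obtain ⟨u, v, rfl, hu, hv⟩ := ih h
        exact ⟨u, v ++ [b], by simp, hu, by rw [projOe_append, hv, hb]; rfl⟩
      · rw [hb] at h
        obtain ⟨h1, h2⟩ := List.append_inj' h rfl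
        obtain rfl : b = e := by simpa using h2
        exact ⟨w, [], rfl, h1, rfl⟩

lemma projOe_nil_mem {So : Set S} :
    ∀ {v : List (Ev S)}, projOe So v = [] →
      ∀ b ∈ v, ∃ a, b = Ev.plain a ∧ a ∉ So := by
  intro v
  induction v with
  | nil => intro _ b hb; simp at hb
  | cons c v ih =>
      intro h b hb
      rw [projOe_cons' So c v, List.append_eq_nil_iff] at h
      rcases List.mem_cons.mp hb with rfl | hb
      · exact projOe_single_empty h.1
      · exact ih h.2 b hb

lemma exists_plain_list {So : Set S} :
    ∀ {v : List (Ev S)}, (∀ b ∈ v, ∃ a, b = Ev.plain a ∧ a ∉ So) →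
      ∃ t : List S, v = t.map Ev.plain := by
  intro v
  induction v with
  | nil => exact fun _ => ⟨[], rfl⟩
  | cons c v ih =>
      intro h
      obtain ⟨a, rfl, -⟩ := h c (List.mem_cons_self)
      obtain ⟨t, rfl⟩ := ih fun b hb => h b (List.mem_cons_of_mem _ hb)
      exact ⟨a :: t, rfl⟩

lemma projOe_map_plain_nil {So : Set S} :
    ∀ {t : List S}, (∀ a ∈ t, a ∉ So) → projOe So (t.map Ev.plain) = [] := by
  intro t
  induction t with
  | nil => intro _; rfl
  | cons a t ih =>
      intro h
      simp only [List.map_cons]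
      rw [projOe_cons', ih fun b hb => h b (List.mem_cons_of_mem _ hb)]
      simp [projOe, h a (List.mem_cons_self)]

/-- Combination of three options. -/
def comb3 {α β γ : Type} (o1 : Option α) (o2 : Option β) (o3 : Option γ) :
    Option (α × β × γ) :=
  o1.bind fun x => o2.bind fun y => o3.map fun z => (x, y, z)

/-- Combination of two options with a fixed third component. -/
def comb2A {α β γ : Type} (o1 : Option α) (o2 : Option β) (z : γ) :
    Option (α × β × γ) :=
  o1.bind fun x => o2.map fun y => (x, y, z)

lemma δGRA_plain (p : XG × XR × XA) (a : S) :
    δGRA So Sa δG δR δA p (Ev.plain a) =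
      if a ∈ So then
        comb3 (δGa Sa δG p.1 (Ev.plain a)) (δRa Sa δR p.2.1 (Ev.plain a))
          (δA p.2.2 (Ev.plain a))
      else comb2A (δGa Sa δG p.1 (Ev.plain a)) (δRa Sa δR p.2.1 (Ev.plain a))
        p.2.2 := by
  by_cases ha : a ∈ So
  · simp only [δGRA, if_pos ha]
    cases δGa Sa δG p.1 (Ev.plain a) <;> cases δRa Sa δR p.2.1 (Ev.plain a) <;>
      cases δA p.2.2 (Ev.plain a) <;> rfl
  · simp only [δGRA, if_neg ha]
    cases δGa Sa δG p.1 (Ev.plain a) <;> cases δRa Sa δR p.2.1 (Ev.plain a) <;> rfl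

lemma δGRA_ins (p : XG × XR × XA) (a : S) :
    δGRA So Sa δG δR δA p (Ev.ins a) =
      comb3 (δGa Sa δG p.1 (Ev.ins a)) (δRa Sa δR p.2.1 (Ev.ins a))
        (δA p.2.2 (Ev.ins a)) := by
  simp only [δGRA]
  cases δGa Sa δG p.1 (Ev.ins a) <;> cases δRa Sa δR p.2.1 (Ev.ins a) <;>
    cases δA p.2.2 (Ev.ins a) <;> rfl

lemma δGRA_del (p : XG × XR × XA) (a : S) :
    δGRA So Sa δG δR δA p (Ev.del a) =
      comb3 (δGa Sa δG p.1 (Ev.del a)) (δRa Sa δR p.2.1 (Ev.del a))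
        (δA p.2.2 (Ev.del a)) := by
  simp only [δGRA]
  cases δGa Sa δG p.1 (Ev.del a) <;> cases δRa Sa δR p.2.1 (Ev.del a) <;>
    cases δA p.2.2 (Ev.del a) <;> rfl

lemma δGRA_step {p p' : XG × XR × XA} {e : Ev S}
    (h : δGRA So Sa δG δR δA p e = some p') :
    δGa Sa δG p.1 e = some p'.1 ∧ δRa Sa δR p.2.1 e = some p'.2.1 ∧
      ((∃ a, e = Ev.plain a ∧ a ∉ So ∧ p'.2.2 = p.2.2) ∨
        (projOe So [e] = [e] ∧ δA p.2.2 e = some p'.2.2)) := by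
  rcases e with a | a | a
  · rw [δGRA_plain] at h
    by_cases ha : a ∈ So
    · rw [if_pos ha] at h
      simp only [comb3, Option.bind_eq_some_iff, Option.map_eq_some_iff] at h
      obtain ⟨x, hx, yv, hyv, z, hz, rfl⟩ := h
      exact ⟨hx, hyv, Or.inr ⟨by simp [projOe, ha], hz⟩⟩
    · rw [if_neg ha] at h
      simp only [comb2A, Option.bind_eq_some_iff, Option.map_eq_some_iff] at h
      obtain ⟨x, hx, yv, hyv, rfl⟩ := h
      exact ⟨hx, hyv, Or.inl ⟨a, rfl, ha, rfl⟩⟩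
  · rw [δGRA_ins] at h
    simp only [comb3, Option.bind_eq_some_iff, Option.map_eq_some_iff] at h
    obtain ⟨x, hx, yv, hyv, z, hz, rfl⟩ := h
    exact ⟨hx, hyv, Or.inr ⟨by simp [projOe], hz⟩⟩
  · rw [δGRA_del] at h
    simp only [comb3, Option.bind_eq_some_iff, Option.map_eq_some_iff] at h
    obtain ⟨x, hx, yv, hyv, z, hz, rfl⟩ := h
    exact ⟨hx, hyv, Or.inr ⟨by simp [projOe], hz⟩⟩

lemma δGRA_step_mk {e : Ev S} (he : inOe So Sa e) {x x' : XG} {y y' : XR}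
    {z z' : XA} (hg : δGa Sa δG x e = some x') (hr : δRa Sa δR y e = some y')
    (hA : δA z e = some z') :
    δGRA So Sa δG δR δA (x, y, z) e = some (x', y', z') := by
  rcases e with a | a | a
  · have ha : a ∈ So := he
    rw [δGRA_plain, if_pos ha]
    simp only [comb3]
    rw [show δGa Sa δG (x, y, z).1 (Ev.plain a) = some x' from hg]
    rw [show δRa Sa δR (x, y, z).2.1 (Ev.plain a) = some y' from hr]
    rw [show δA (x, y, z).2.2 (Ev.plain a) = some z' from hA]
    rfl
  · rw [δGRA_ins]
    simp only [comb3]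
    rw [show δGa Sa δG (x, y, z).1 (Ev.ins a) = some x' from hg]
    rw [show δRa Sa δR (x, y, z).2.1 (Ev.ins a) = some y' from hr]
    rw [show δA (x, y, z).2.2 (Ev.ins a) = some z' from hA]
    rfl
  · rw [δGRA_del]
    simp only [comb3]
    rw [show δGa Sa δG (x, y, z).1 (Ev.del a) = some x' from hg]
    rw [show δRa Sa δR (x, y, z).2.1 (Ev.del a) = some y' from hr]
    rw [show δA (x, y, z).2.2 (Ev.del a) = some z' from hA]
    rfl

lemma δGRA_step_mk_unobs {a : S} (ha : a ∉ So) {x x' : XG} {y : XR} {z : XA}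
    (hg : δGa Sa δG x (Ev.plain a) = some x')
    (hr : δRa Sa δR y (Ev.plain a) = some y) :
    δGRA So Sa δG δR δA (x, y, z) (Ev.plain a) = some (x', y, z) := by
  rw [δGRA_plain, if_neg ha]
  simp only [comb2A]
  rw [show δGa Sa δG (x, y, z).1 (Ev.plain a) = some x' from hg]
  rw [show δRa Sa δR (x, y, z).2.1 (Ev.plain a) = some y from hr]
  rfl

lemma run_proj (hR : IsSupRealization So Suc δR) :
    ∀ (t : List (Ev S)) (p p' : XG × XR × XA),
      run (δGRA So Sa δG δR δA) p t = some p' →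
      run (δGa Sa δG) p.1 t = some p'.1 ∧
      run (δRa Sa δR) p.2.1 (projOe So t) = some p'.2.1 ∧
      run δA p.2.2 (projOe So t) = some p'.2.2 := by
  intro t
  induction t with
  | nil =>
      intro p p' h
      obtain rfl : p = p' := Option.some.inj h
      exact ⟨rfl, rfl, rfl⟩
  | cons e t ih =>
      intro p p' h
      simp only [run] at h
      obtain ⟨q, hq, hrest⟩ := Option.bind_eq_some_iff.mp h
      obtain ⟨hg, hr, hAor⟩ := δGRA_step hq
      obtain ⟨ihg, ihr, ihA⟩ := ih q p' hrest
      rcases hAor with ⟨a, rfl, ha, hz⟩ | ⟨hkeep, hA⟩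
      · have hr' : δR p.2.1 a = some q.2.1 := hr
        have heq : δR p.2.1 a = some p.2.1 := hR.2 _ _ ha (by rw [hr']; rfl)
        have hq21 : q.2.1 = p.2.1 := by
          rw [heq] at hr'; exact (Option.some.inj hr').symm
        have hdrop : projOe So (Ev.plain a :: t) = projOe So t := by
          rw [projOe_cons']
          simp [projOe, ha]
        refine ⟨?_, ?_, ?_⟩
        · simp only [run, hg, Option.bind_some]; exact ihg
        · rw [hdrop, ← hq21]; exact ihr
        · rw [hdrop, ← hz]; exact ihA
      · have hcons : projOe So (e :: t) = e :: projOe So t := by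
          rw [projOe_cons', hkeep]; rfl
        refine ⟨?_, ?_, ?_⟩
        · simp only [run, hg, Option.bind_some]; exact ihg
        · rw [hcons]; simp only [run, hr, Option.bind_some]; exact ihr
        · rw [hcons]; simp only [run, hA, Option.bind_some]; exact ihA

lemma run_unobs_tail (hR : IsSupRealization So Suc δR) :
    ∀ (v : List (Ev S)) (p p' : XG × XR × XA),
      (∀ b ∈ v, ∃ a, b = Ev.plain a ∧ a ∉ So) →
      run (δGRA So Sa δG δR δA) p v = some p' →
      run (δGa Sa δG) p.1 v = some p'.1 ∧ p'.2.1 = p.2.1 ∧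
        ∀ b ∈ v, (δRa Sa δR p.2.1 b).isSome := by
  intro v
  induction v with
  | nil =>
      intro p p' _ h
      obtain rfl : p = p' := Option.some.inj h
      exact ⟨rfl, rfl, by simp⟩
  | cons c v ih =>
      intro p p' hmem h
      simp only [run] at h
      obtain ⟨q, hq, hrest⟩ := Option.bind_eq_some_iff.mp h
      obtain ⟨a, rfl, ha⟩ := hmem _ (List.mem_cons_self)
      obtain ⟨hg, hr, -⟩ := δGRA_step hq
      have hr' : δR p.2.1 a = some q.2.1 := hr
      have heq : δR p.2.1 a = some p.2.1 := hR.2 _ _ ha (by rw [hr']; rfl)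
      have hq21 : q.2.1 = p.2.1 := by
        rw [heq] at hr'; exact (Option.some.inj hr').symm
      obtain ⟨ihg, ihr, ihmem⟩ :=
        ih q p' (fun b hb => hmem b (List.mem_cons_of_mem _ hb)) hrest
      refine ⟨by simp only [run, hg, Option.bind_some]; exact ihg,
        by rw [ihr, hq21], ?_⟩
      intro b hb
      rcases List.mem_cons.mp hb with rfl | hb
      · rw [show δRa Sa δR p.2.1 (Ev.plain a) = δR p.2.1 a from rfl, heq]; rfl
      · rw [← hq21]; exact ihmem b hb

lemma run_unobs_build (hR : IsSupRealization So Suc δR) :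
    ∀ (t : List S) (xg x : XG) (y : XR) (z : XA),
      (∀ a ∈ t, a ∉ So ∧ (δR y a).isSome) →
      run (δGa Sa δG) xg (t.map Ev.plain) = some x →
      run (δGRA So Sa δG δR δA) (xg, y, z) (t.map Ev.plain) = some (x, y, z) := by
  intro t
  induction t with
  | nil =>
      intro xg x y z _ h
      obtain rfl : xg = x := Option.some.inj h
      rfl
  | cons a t ih =>
      intro xg x y z hmem h
      simp only [List.map_cons, run] at h ⊢
      obtain ⟨xg', hxg', hrest⟩ := Option.bind_eq_some_iff.mp h
      obtain ⟨ha, hy⟩ := hmem a (List.mem_cons_self)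
      have hy' : δR y a = some y := hR.2 _ _ ha hy
      have hstep : δGRA So Sa δG δR δA (xg, y, z) (Ev.plain a) = some (xg', y, z) :=
        δGRA_step_mk_unobs ha hxg' hy'
      rw [hstep, Option.bind_some]
      exact ih xg' x y z (fun b hb => hmem b (List.mem_cons_of_mem _ hb)) hrest

end Eq20Aux


/-- Equation (20): recursive characterization of the attacked
state estimate: `RE(se) = {x : x = δ_{G_a}(δ_{G_a}(RE(s),e), t),
t ∈ (Σ_uo ∩ Γ_{R_a}(δ_{R_a}(x_{0,R}, se)))*}`. -/
theorem RE_recursion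
    [Finite S] [Finite XG] [Finite XR] [Finite XA]
    (So Suc Sa : Set S) (hSa : Sa ⊆ So)
    (δG : XG → S → Option XG) (x0G : XG)
    (δR : XR → S → Option XR) (x0R : XR) (hR : IsSupRealization So Suc δR)
    (δA : XA → Ev S → Option XA) (x0A : XA) (hA : IsAttack So Sa δA)
    (s : List (Ev S)) (e : Ev S) (he : inOe So Sa e)
    (hs : s ∈ projOe So '' Lang (δGRA So Sa δG δR δA) (x0G, x0R, x0A))
    (hse : s ++ [e] ∈ projOe So '' Lang (δGRA So Sa δG δR δA) (x0G, x0R, x0A)) :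
    ∀ y, run (δRa Sa δR) x0R (s ++ [e]) = some y →
      RE So Sa δG x0G δR x0R δA x0A (s ++ [e]) =
        {x | ∃ x1 ∈ RE So Sa δG x0G δR x0R δA x0A s, ∃ x2,
          δGa Sa δG x1 e = some x2 ∧
          ∃ t : List S, (∀ a ∈ t, a ∉ So ∧ (δRa Sa δR y (Ev.plain a)).isSome) ∧
            run (δGa Sa δG) x2 (t.map Ev.plain) = some x} := by
  intro y hy
  -- unpack the witness trace for `s ++ [e]`
  obtain ⟨t', ht'mem, ht'proj⟩ := hse
  simp only [Lang, Set.mem_setOf_eq, Option.isSome_iff_exists] at ht'mem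
  obtain ⟨Pf, hPf⟩ := ht'mem
  obtain ⟨u', v', rfl, hu'proj, hv'proj⟩ := projOe_split ht'proj
  rw [run_append'] at hPf
  obtain ⟨P1, hP1, hPrest⟩ := Option.bind_eq_some_iff.mp hPf
  obtain ⟨P1g, P1r, P1a⟩ := P1
  simp only [run] at hPrest
  obtain ⟨P2, hP2, -⟩ := Option.bind_eq_some_iff.mp hPrest
  obtain ⟨P2g, P2r, P2a⟩ := P2
  obtain ⟨hP1g, hP1r, hP1a⟩ := run_proj (Suc := Suc) hR u' _ _ hP1
  rw [hu'proj] at hP1r hP1a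
  have hP1r' : run (δRa Sa δR) x0R s = some P1r := hP1r
  have hP1a' : run δA x0A s = some P1a := hP1a
  obtain ⟨hGe, hRe, hAor⟩ := δGRA_step hP2
  have hRe' : δRa Sa δR P1r e = some P2r := hRe
  have hAe : δA P1a e = some P2a := by
    rcases hAor with ⟨a, rfl, ha, -⟩ | ⟨-, hAe⟩
    · exact absurd (show a ∈ So from he) ha
    · exact hAe
  have hyP2 : P2r = y := by
    have hrun : run (δRa Sa δR) x0R (s ++ [e]) = some P2r := by
      rw [run_append', hP1r', Option.bind_some]
      simp only [run]
      rw [hRe', Option.bind_some]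
    rw [hrun] at hy
    exact Option.some.inj hy
  ext x
  simp only [RE, Set.mem_setOf_eq]
  constructor
  · rintro ⟨t, htproj, htlang, htrun⟩
    simp only [Lang, Set.mem_setOf_eq, Option.isSome_iff_exists] at htlang
    obtain ⟨Qf, hQf⟩ := htlang
    obtain ⟨u, v, rfl, huproj, hvproj⟩ := projOe_split htproj
    rw [run_append'] at hQf
    obtain ⟨Q1, hQ1, hQrest⟩ := Option.bind_eq_some_iff.mp hQf
    obtain ⟨Q1g, Q1r, Q1a⟩ := Q1
    simp only [run] at hQrest
    obtain ⟨Q2, hQ2, hQtail⟩ := Option.bind_eq_some_iff.mp hQrest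
    obtain ⟨Q2g, Q2r, Q2a⟩ := Q2
    obtain ⟨hQ1g, hQ1r, -⟩ := run_proj (Suc := Suc) hR u _ _ hQ1
    rw [huproj] at hQ1r
    have hQ1g' : run (δGa Sa δG) x0G u = some Q1g := hQ1g
    have hQ1r' : run (δRa Sa δR) x0R s = some Q1r := hQ1r
    obtain ⟨hGe2, hRe2, -⟩ := δGRA_step hQ2
    have hGe2' : δGa Sa δG Q1g e = some Q2g := hGe2
    have hRe2' : δRa Sa δR Q1r e = some Q2r := hRe2
    have hvm := projOe_nil_mem hvproj
    obtain ⟨-, -, hQmem⟩ := run_unobs_tail (Suc := Suc) hR v _ _ hvm hQtail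
    have hQmem' : ∀ b ∈ v, (δRa Sa δR Q2r b).isSome := hQmem
    -- identify `y`
    have hQ2ry : Q2r = y := by
      have hrun : run (δRa Sa δR) x0R (s ++ [e]) = some Q2r := by
        rw [run_append', hQ1r', Option.bind_some]
        simp only [run]
        rw [hRe2', Option.bind_some]
      rw [hrun] at hy
      exact Option.some.inj hy
    -- identify the G-run of the full trace
    rw [run_append', hQ1g', Option.bind_some] at htrun
    simp only [run] at htrun
    obtain ⟨x2v, hx2v, htail⟩ := Option.bind_eq_some_iff.mp htrun
    have hx2vQ : x2v = Q2g := Option.some.inj (hx2v.symm.trans hGe2')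
    obtain ⟨tS, rfl⟩ := exists_plain_list hvm
    refine ⟨Q1g, ⟨u, huproj, ?_, hQ1g'⟩, Q2g, hGe2', tS, ?_, ?_⟩
    · simp only [Lang, Set.mem_setOf_eq]
      rw [hQ1]
      rfl
    · intro a ha
      have hmem : Ev.plain a ∈ tS.map Ev.plain := List.mem_map.mpr ⟨a, ha, rfl⟩
      obtain ⟨a', heq, ha'⟩ := hvm _ hmem
      have : a = a' := by cases heq; rfl
      refine ⟨this ▸ ha', ?_⟩
      rw [← hQ2ry]
      exact hQmem' _ hmem
    · rw [← hx2vQ]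
      exact htail
  · rintro ⟨x1, hx1RE, x2, hx2e, tS, htS, hrun2⟩
    obtain ⟨u, huproj, hulang, hurun⟩ := hx1RE
    simp only [Lang, Set.mem_setOf_eq, Option.isSome_iff_exists] at hulang
    obtain ⟨Q1, hQ1⟩ := hulang
    obtain ⟨Q1g, Q1r, Q1a⟩ := Q1
    obtain ⟨hQ1g, hQ1r, hQ1a⟩ := run_proj (Suc := Suc) hR u _ _ hQ1
    rw [huproj] at hQ1r hQ1a
    have hQ1g' : run (δGa Sa δG) x0G u = some Q1g := hQ1g
    have hQ1r' : run (δRa Sa δR) x0R s = some Q1r := hQ1r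
    have hQ1a' : run δA x0A s = some Q1a := hQ1a
    obtain rfl : Q1g = x1 := Option.some.inj (hQ1g'.symm.trans hurun)
    have hQrP : Q1r = P1r := Option.some.inj (hQ1r'.symm.trans hP1r')
    have hQaP : Q1a = P1a := Option.some.inj (hQ1a'.symm.trans hP1a')
    have hstep : δGRA So Sa δG δR δA (Q1g, Q1r, Q1a) e = some (x2, y, P2a) :=
      δGRA_step_mk he hx2e (by rw [hQrP, ← hyP2]; exact hRe')
        (by rw [hQaP]; exact hAe)
    have hbuild := run_unobs_build (So := So) (Sa := Sa) (Suc := Suc)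
      (δG := δG) (δA := δA) hR tS x2 x y P2a (fun a ha => (htS a ha)) hrun2
    have hw : run (δGRA So Sa δG δR δA) (x0G, x0R, x0A)
        (u ++ e :: tS.map Ev.plain) = some (x, y, P2a) := by
      rw [run_append', hQ1, Option.bind_some]
      simp only [run]
      rw [hstep, Option.bind_some]
      exact hbuild
    refine ⟨u ++ e :: tS.map Ev.plain, ?_, ?_, ?_⟩
    · have heq : u ++ e :: tS.map Ev.plain = (u ++ [e]) ++ tS.map Ev.plain := by
        simp
      rw [heq, projOe_append, projOe_append, huproj, projOe_single_keep he,
        projOe_map_plain_nil fun a ha => (htS a ha).1, List.append_nil]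
    · simp only [Lang, Set.mem_setOf_eq]
      rw [hw]
      rfl
    · rw [run_append', hQ1g', Option.bind_some]
      simp only [run]
      rw [show δGa Sa δG Q1g e = some x2 from hx2e, Option.bind_some]
      exact hrun2
end RobustDES
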